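/- There exist a hyperconvex diversity (X, δ) with bounded induced metric space (X, d) and a mapping T : X → X, nonexpansive with respect to d, such that there is no nonempty finite subset F ⊆ X with T(F) = F (where T(F) denotes the image of F under T). In particular, T has no fixed point with respect to the diversity. -/

import Mathlib

/-- A diversity on `X`: a real-valued function on finite subsets of `X` which is
nonnegative, vanishes exactly on sets of cardinality at most one, and satisfies the
triangle inequality `δ(A ∪ C) ≤ δ(A ∪ B) + δ(B ∪ C)` for nonempty `B`. -/
structure Diversity (X : Type*) [DecidableEq X] where
  delta : Finset X → ℝ
  nonneg : ∀ A, 0 ≤ delta A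
  eq_zero_iff : ∀ A, delta A = 0 ↔ A.card ≤ 1
  triangle : ∀ A B C : Finset X, B.Nonempty →
    delta (A ∪ C) ≤ delta (A ∪ B) + delta (B ∪ C)

namespace Diversity

variable {X : Type*} [DecidableEq X]

/-- A diversity is hyperconvex if for every `r : ⟨X⟩ → ℝ` with `r ∅ = 0` such that
`δ(⋃_{A ∈ 𝒜} A) ≤ ∑_{A ∈ 𝒜} r A` for every finite collection `𝒜` of finite subsets
of `X`, there is `z ∈ X` with `δ({z} ∪ Y) ≤ r Y` for all finite `Y ⊆ X`. -/
def Hyperconvex (D : Diversity X) : Prop :=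
  ∀ r : Finset X → ℝ, r ∅ = 0 →
    (∀ 𝒜 : Finset (Finset X), D.delta (𝒜.sup id) ≤ ∑ A ∈ 𝒜, r A) →
    ∃ z : X, ∀ Y : Finset X, D.delta (insert z Y) ≤ r Y

/-- A diversity is bounded if its values are uniformly bounded above. -/
def Bounded (D : Diversity X) : Prop :=
  ∃ M : ℝ, 0 ≤ M ∧ ∀ A : Finset X, D.delta A ≤ M

end Diversity


noncomputable section

open Finset

/-- A pairwise disjoint finite family of finite subsets of ℕ. -/
def famOK (𝒟 : Finset (Finset ℕ)) : Prop := ∀ D ∈ 𝒟, ∀ E ∈ 𝒟, D ≠ E → Disjoint D E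

/-- All members of the family are disjoint from `A`. -/
def famAvoid (𝒟 : Finset (Finset ℕ)) (A : Finset ℕ) : Prop := ∀ D ∈ 𝒟, Disjoint D A

/-- A (sub)capacity: vanishing at ∅, nonnegative, with sums over disjoint families ≤ 1. -/
def IsCap (q : Finset ℕ → ℝ) : Prop :=
  q ∅ = 0 ∧ (∀ A, 0 ≤ q A) ∧ ∀ 𝒟 : Finset (Finset ℕ), famOK 𝒟 → ∑ D ∈ 𝒟, q D ≤ 1

/-- Maximality (tightness) of a capacity. -/
def TightCap (q : Finset ℕ → ℝ) : Prop :=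
  ∀ A : Finset ℕ, A ≠ ∅ → ∀ ε : ℝ, 0 < ε →
    ∃ 𝒟 : Finset (Finset ℕ), famOK 𝒟 ∧ famAvoid 𝒟 A ∧ 1 - ε < q A + ∑ D ∈ 𝒟, q D

/-- The carrier: maximal capacities on ℕ. -/
def Pt : Type := {q : Finset ℕ → ℝ // IsCap q ∧ TightCap q}

instance : DecidableEq Pt := Classical.decEq _

namespace Pt

lemma empty0 (x : Pt) : x.1 ∅ = 0 := x.2.1.1

lemma nonneg (x : Pt) (A : Finset ℕ) : 0 ≤ x.1 A := x.2.1.2.1 A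

lemma fam_le (x : Pt) {𝒟 : Finset (Finset ℕ)} (h : famOK 𝒟) : ∑ D ∈ 𝒟, x.1 D ≤ 1 :=
  x.2.1.2.2 𝒟 h

lemma tight (x : Pt) : TightCap x.1 := x.2.2

lemma le_one (x : Pt) (A : Finset ℕ) : x.1 A ≤ 1 := by
  have h : famOK {A} := by
    intro D hD E hE hne
    simp only [mem_singleton] at hD hE
    exact absurd (hD.trans hE.symm) hne
  simpa using x.fam_le h

lemma eq_empty_of_selfdisj {A : Finset ℕ} (h : Disjoint A A) : A = ∅ := by
  simpa using disjoint_self.mp h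

lemma superadd (x : Pt) {A B : Finset ℕ} (hAB : Disjoint A B) :
    x.1 A + x.1 B ≤ x.1 (A ∪ B) := by
  rcases eq_or_ne A ∅ with rfl | hA
  · simp [x.empty0]
  rcases eq_or_ne B ∅ with rfl | hB
  · simp [x.empty0]
  have hABne : A ≠ B := by
    rintro rfl
    exact hA (Pt.eq_empty_of_selfdisj hAB)
  have hUne : A ∪ B ≠ ∅ := by
    intro h
    exact hA (Finset.union_eq_empty.mp h).1
  refine le_of_forall_pos_le_add ?_
  intro ε hε
  obtain ⟨𝒟, h𝒟, hAv, hlt⟩ := x.tight (A ∪ B) hUne ε hε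
  have hAD : ∀ D ∈ 𝒟, Disjoint A D := fun D hD =>
    ((hAv D hD).symm.mono_left Finset.subset_union_left)
  have hBD : ∀ D ∈ 𝒟, Disjoint B D := fun D hD =>
    ((hAv D hD).symm.mono_left Finset.subset_union_right)
  have hAni : A ∉ insert B 𝒟 := by
    simp only [mem_insert]
    rintro (rfl | hA𝒟)
    · exact hABne rfl
    · exact hA (Pt.eq_empty_of_selfdisj (hAD A hA𝒟))
  have hBn : B ∉ 𝒟 := fun h => hB (Pt.eq_empty_of_selfdisj (hBD B h))
  have hfam : famOK (insert A (insert B 𝒟)) := by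
    intro D hD E hE hne
    simp only [mem_insert] at hD hE
    rcases hD with rfl | rfl | hD <;> rcases hE with rfl | rfl | hE
    · exact absurd rfl hne
    · exact hAB
    · exact hAD E hE
    · exact hAB.symm
    · exact absurd rfl hne
    · exact hBD E hE
    · exact (hAD D hD).symm
    · exact (hBD D hD).symm
    · exact h𝒟 D hD E hE hne
  have hsum := x.fam_le hfam
  rw [Finset.sum_insert hAni, Finset.sum_insert hBn] at hsum
  -- hsum : x.1 A + (x.1 B + ∑ D ∈ 𝒟, x.1 D) ≤ 1
  -- hlt : 1 - ε < x.1 (A ∪ B) + ∑ D ∈ 𝒟, x.1 D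
  linarith

lemma sum_le_sup (x : Pt) {𝒟 : Finset (Finset ℕ)} (h : famOK 𝒟) :
    ∑ D ∈ 𝒟, x.1 D ≤ x.1 (𝒟.sup id) := by
  classical
  induction 𝒟 using Finset.induction_on with
  | empty => simp [x.empty0]
  | @insert D 𝒟 hD ih =>
    have h' : famOK 𝒟 := fun E hE E' hE' hne =>
      h E (mem_insert_of_mem hE) E' (mem_insert_of_mem hE') hne
    have hdisj : Disjoint D (𝒟.sup id) := by
      rw [Finset.disjoint_sup_right]
      intro E hE
      exact h D (mem_insert_self _ _) E (mem_insert_of_mem hE) (fun hEq => hD (hEq ▸ hE))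
    calc ∑ E ∈ insert D 𝒟, x.1 E = x.1 D + ∑ E ∈ 𝒟, x.1 E := Finset.sum_insert hD
    _ ≤ x.1 D + x.1 (𝒟.sup id) := by linarith [ih h']
    _ ≤ x.1 (D ∪ 𝒟.sup id) := x.superadd hdisj
    _ = x.1 ((insert D 𝒟).sup id) := by rw [Finset.sup_insert]; rfl

lemma near_one (x : Pt) {ε : ℝ} (hε : 0 < ε) : ∃ A : Finset ℕ, A ≠ ∅ ∧ 1 - ε < x.1 A := by
  obtain ⟨𝒟, h𝒟, hAv, hlt⟩ := x.tight {0} (by simp) ε hε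
  refine ⟨{0} ∪ 𝒟.sup id, Finset.ne_empty_of_mem (a := 0) (by simp), ?_⟩
  have hdisj : Disjoint ({0} : Finset ℕ) (𝒟.sup id) := by
    rw [Finset.disjoint_sup_right]
    intro E hE
    exact (hAv E hE).symm
  calc 1 - ε < x.1 {0} + ∑ D ∈ 𝒟, x.1 D := hlt
  _ ≤ x.1 {0} + x.1 (𝒟.sup id) := by linarith [x.sum_le_sup h𝒟]
  _ ≤ x.1 ({0} ∪ 𝒟.sup id) := x.superadd hdisj

end Pt
/-- The set of values of disjoint assignments on `F`. -/
def Vals (F : Finset Pt) : Set ℝ :=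
  {v | ∃ a : Pt → Finset ℕ,
    (∀ x ∈ F, ∀ y ∈ F, x ≠ y → Disjoint (a x) (a y)) ∧ v = ∑ x ∈ F, x.1 (a x)}

/-- The diversity on `Pt`. -/
def dlt (F : Finset Pt) : ℝ := sSup (insert 1 (Vals F)) - 1

lemma zero_mem_Vals (F : Finset Pt) : (0:ℝ) ∈ Vals F := by
  refine ⟨fun _ => ∅, fun x _ y _ _ => disjoint_bot_left, ?_⟩
  rw [Finset.sum_eq_zero]
  intro x _
  exact x.empty0

lemma Vals_bddAbove (F : Finset Pt) : BddAbove (insert 1 (Vals F)) := by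
  refine ⟨(F.card : ℝ) + 1, ?_⟩
  rintro v (rfl | ⟨a, ha, rfl⟩)
  · have : (0:ℝ) ≤ F.card := Nat.cast_nonneg _
    linarith
  · calc ∑ x ∈ F, x.1 (a x) ≤ ∑ _x ∈ F, (1:ℝ) :=
          Finset.sum_le_sum (fun x _ => x.le_one _)
    _ = F.card := by simp
    _ ≤ F.card + 1 := by linarith

lemma one_le_sSup (F : Finset Pt) : 1 ≤ sSup (insert 1 (Vals F)) :=
  le_csSup (Vals_bddAbove F) (Set.mem_insert _ _)

lemma dlt_nonneg (F : Finset Pt) : 0 ≤ dlt F := by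
  have := one_le_sSup F
  unfold dlt
  linarith

lemma le_dlt {F : Finset Pt} {v : ℝ} (hv : v ∈ Vals F) : v ≤ dlt F + 1 := by
  have := le_csSup (Vals_bddAbove F) (Set.mem_insert_of_mem _ hv)
  unfold dlt
  linarith

lemma dlt_le {F : Finset Pt} {c : ℝ} (h1 : 0 ≤ c) (h : ∀ v ∈ Vals F, v ≤ c + 1) :
    dlt F ≤ c := by
  have : sSup (insert 1 (Vals F)) ≤ c + 1 := by
    refine csSup_le (Set.insert_nonempty _ _) ?_
    rintro v (rfl | hv)
    · linarith
    · exact h v hv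
  unfold dlt
  linarith

lemma dlt_of_card_le_one {F : Finset Pt} (h : F.card ≤ 1) : dlt F = 0 := by
  refine le_antisymm (dlt_le le_rfl ?_) (dlt_nonneg F)
  rintro v ⟨a, ha, rfl⟩
  rcases F.eq_empty_or_nonempty with rfl | ⟨x, hx⟩
  · simp
  · have hFx : F = {x} := by
      refine Finset.eq_singleton_iff_unique_mem.mpr ⟨hx, fun y hy => ?_⟩
      exact Finset.card_le_one.mp h y hy x hx
    subst hFx
    rw [Finset.sum_singleton]
    have := x.le_one (a x)
    linarith

lemma exists_gt_one {x y : Pt} {A : Finset ℕ} (hA : y.1 A < x.1 A) :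
    ∃ B, Disjoint A B ∧ 1 < x.1 A + y.1 B := by
  have hAne : A ≠ ∅ := by
    rintro rfl
    rw [x.empty0, y.empty0] at hA
    exact lt_irrefl _ hA
  obtain ⟨𝒟, h𝒟, hAv, hlt⟩ := y.tight A hAne (x.1 A - y.1 A) (by linarith)
  refine ⟨𝒟.sup id, ?_, ?_⟩
  · rw [Finset.disjoint_sup_right]
    intro E hE
    exact (hAv E hE).symm
  · have := y.sum_le_sup h𝒟
    linarith

lemma dlt_pos {F : Finset Pt} {x y : Pt} (hx : x ∈ F) (hy : y ∈ F) (hxy : x ≠ y) :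
    0 < dlt F := by
  -- an auxiliary, asymmetric version
  have key : ∀ x' y' : Pt, x' ∈ F → y' ∈ F → x' ≠ y' →
      ∀ A : Finset ℕ, y'.1 A < x'.1 A → 0 < dlt F := by
    intro x' y' hx' hy' hne A hA
    obtain ⟨B, hAB, hgt⟩ := exists_gt_one hA
    set a : Pt → Finset ℕ := fun w => if w = x' then A else if w = y' then B else ∅ with ha_def
    have haval : ∀ w ∈ F, ∀ z ∈ F, w ≠ z → Disjoint (a w) (a z) := by
      intro w _ z _ hwz
      simp only [ha_def]
      by_cases hw1 : w = x' <;> by_cases hz1 : z = x' <;>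
        by_cases hw2 : w = y' <;> by_cases hz2 : z = y' <;>
        simp_all <;> first
          | exact hAB
          | exact hAB.symm
          | exact disjoint_bot_left
          | exact disjoint_bot_right
    have hsum : ∑ w ∈ F, w.1 (a w) = x'.1 A + y'.1 B := by
      have hsub : ({x', y'} : Finset Pt) ⊆ F := by
        intro w hw
        simp only [Finset.mem_insert, Finset.mem_singleton] at hw
        rcases hw with rfl | rfl
        · exact hx'
        · exact hy'
      have e1 : a x' = A := by simp [ha_def]
      have e2 : a y' = B := by simp [ha_def, Ne.symm hne]
      rw [← Finset.sum_subset hsub (fun w _ hw => ?_)]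
      · rw [Finset.sum_pair hne, e1, e2]
      · simp only [Finset.mem_insert, Finset.mem_singleton, not_or] at hw
        simp only [ha_def, if_neg hw.1, if_neg hw.2]
        exact w.empty0
    have hmem : x'.1 A + y'.1 B ∈ Vals F := ⟨a, haval, hsum.symm⟩
    have := le_dlt hmem
    linarith
  rcases Function.ne_iff.mp (show x.1 ≠ y.1 from fun h => hxy (Subtype.ext h)) with ⟨A, hA⟩
  rcases lt_or_gt_of_ne hA with h | h
  · exact key y x hy hx hxy.symm A h
  · exact key x y hx hy hxy A h

lemma dlt_eq_zero_iff (F : Finset Pt) : dlt F = 0 ↔ F.card ≤ 1 := by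
  constructor
  · intro h
    by_contra hc
    push_neg at hc
    obtain ⟨x, hx, y, hy, hxy⟩ := Finset.one_lt_card.mp hc
    exact absurd h (ne_of_gt (dlt_pos hx hy hxy))
  · exact dlt_of_card_le_one

lemma dlt_pair_le_one (x y : Pt) : dlt {x, y} ≤ 1 := by
  refine dlt_le zero_le_one ?_
  rintro v ⟨a, ha, rfl⟩
  calc ∑ w ∈ ({x, y} : Finset Pt), w.1 (a w) ≤ ∑ _w ∈ ({x, y} : Finset Pt), (1:ℝ) :=
        Finset.sum_le_sum (fun w _ => w.le_one _)
  _ = (({x, y} : Finset Pt).card : ℝ) := by simp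
  _ ≤ 2 := by
      have := Finset.card_insert_le x ({y} : Finset Pt)
      have h2 : (({x, y} : Finset Pt).card : ℝ) ≤ ((1:ℕ) + 1 : ℕ) := by
        exact_mod_cast le_trans this (by simp)
      simpa using h2
  _ = 1 + 1 := by norm_num
/-- Key helper: an assignment on `F ⊆ G` plus an extra set `E` handed to `b₀ ∈ G`
gives a lower bound for the sup over `Vals G`. -/
lemma extend_le (G F : Finset Pt) (hFG : F ⊆ G) (a : Pt → Finset ℕ)
    (ha : ∀ x ∈ F, ∀ y ∈ F, x ≠ y → Disjoint (a x) (a y))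
    (b₀ : Pt) (hb₀ : b₀ ∈ G) (E : Finset ℕ) (hE : ∀ x ∈ F, Disjoint (a x) E) :
    (∑ x ∈ F, x.1 (a x)) + b₀.1 E ≤ dlt G + 1 := by
  classical
  set a' : Pt → Finset ℕ :=
    fun x => (if x ∈ F then a x else ∅) ∪ (if x = b₀ then E else ∅) with ha'_def
  have hdisj : ∀ x ∈ G, ∀ y ∈ G, x ≠ y → Disjoint (a' x) (a' y) := by
    intro x _ y _ hxy
    simp only [ha'_def]
    apply Finset.disjoint_union_left.mpr
    constructor <;> apply Finset.disjoint_union_right.mpr <;> constructor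
    · by_cases hx : x ∈ F <;> by_cases hy : y ∈ F <;>
        simp [hx, hy, disjoint_bot_left, disjoint_bot_right]
      exact ha x hx y hy hxy
    · by_cases hx : x ∈ F <;> by_cases hy : y = b₀ <;>
        simp [hx, hy, disjoint_bot_left, disjoint_bot_right]
      exact hE x hx
    · by_cases hx : x = b₀ <;> by_cases hy : y ∈ F <;>
        simp [hx, hy, disjoint_bot_left, disjoint_bot_right]
      exact (hE y hy).symm
    · by_cases hx : x = b₀ <;> by_cases hy : y = b₀ <;>
        simp [hx, hy, disjoint_bot_left, disjoint_bot_right]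
      exact absurd (hx.trans hy.symm) hxy
  have hpt : ∀ x ∈ G,
      (if x ∈ F then x.1 (a x) else 0) + (if x = b₀ then x.1 E else 0) ≤ x.1 (a' x) := by
    intro x _
    by_cases hx : x ∈ F
    · by_cases hb : x = b₀
      · subst hb
        simp only [ha'_def, if_pos hx, if_pos rfl, eq_self_iff_true, if_true]
        exact x.superadd (hE _ hx)
      · simp only [ha'_def, if_pos hx, if_neg hb, Finset.union_empty]
        have := x.nonneg (a x); linarith
    · by_cases hb : x = b₀
      · subst hb
        simp only [ha'_def, if_neg hx, if_pos rfl, eq_self_iff_true, if_true, Finset.empty_union]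
        have := x.nonneg E; linarith
      · simp only [ha'_def, if_neg hx, if_neg hb, Finset.union_empty]
        simp [x.empty0]
  have hsum : (∑ x ∈ F, x.1 (a x)) + b₀.1 E ≤ ∑ x ∈ G, x.1 (a' x) := by
    have h1 : ∑ x ∈ F, x.1 (a x) = ∑ x ∈ G, (if x ∈ F then x.1 (a x) else 0) := by
      rw [Finset.sum_ite_mem, Finset.inter_eq_right.mpr hFG]
    have h2 : b₀.1 E = ∑ x ∈ G, (if x = b₀ then x.1 E else 0) := by
      rw [Finset.sum_ite_eq' G b₀ (fun x => x.1 E), if_pos hb₀]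
    rw [h1, h2, ← Finset.sum_add_distrib]
    exact Finset.sum_le_sum hpt
  exact le_trans hsum (le_dlt ⟨a', hdisj, rfl⟩)

lemma dlt_triangle (A B C : Finset Pt) (hB : B.Nonempty) :
    dlt (A ∪ C) ≤ dlt (A ∪ B) + dlt (B ∪ C) := by
  classical
  obtain ⟨b₀, hb₀⟩ := hB
  have key : ∀ v ∈ Vals (A ∪ C), ∀ ε : ℝ, 0 < ε →
      v ≤ (dlt (A ∪ B) + dlt (B ∪ C)) + 1 + ε := by
    rintro v ⟨a, ha, rfl⟩ ε hε
    set U₂ : Finset ℕ := (C \ A).sup a with hU₂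
    have hsplit : ∑ x ∈ A ∪ C, x.1 (a x) =
        (∑ x ∈ A, x.1 (a x)) + ∑ x ∈ C \ A, x.1 (a x) := by
      rw [← Finset.sum_union (Finset.disjoint_sdiff)]
      congr 1
      rw [Finset.union_sdiff_self_eq_union]
    -- Claim 1
    have hC1 : (∑ x ∈ A, x.1 (a x)) + b₀.1 U₂ ≤ dlt (A ∪ B) + 1 := by
      refine extend_le (A ∪ B) A Finset.subset_union_left a
        (fun x hx y hy hxy => ha x (Finset.mem_union_left _ hx) y (Finset.mem_union_left _ hy) hxy)
        b₀ (Finset.mem_union_right _ hb₀) U₂ ?_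
      intro x hx
      rw [hU₂, Finset.disjoint_sup_right]
      intro y hy
      refine ha x (Finset.mem_union_left _ hx) y (Finset.mem_union_right _ (Finset.mem_sdiff.mp hy).1) ?_
      rintro rfl
      exact (Finset.mem_sdiff.mp hy).2 hx
    -- Claim 2
    have hC2 : (∑ x ∈ C \ A, x.1 (a x)) + (1 - b₀.1 U₂ - ε) ≤ dlt (B ∪ C) + 1 := by
      rcases eq_or_ne U₂ ∅ with hU | hU
      · have hz : ∀ x ∈ C \ A, x.1 (a x) = 0 := by
          intro x hx
          have : a x ⊆ U₂ := Finset.le_sup hx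
          rw [hU, Finset.subset_empty] at this
          rw [this, x.empty0]
        rw [Finset.sum_eq_zero hz, hU, b₀.empty0]
        have := dlt_nonneg (B ∪ C)
        linarith
      · obtain ⟨𝒟, h𝒟, hAv, hlt⟩ := b₀.tight U₂ hU ε hε
        have hsum𝒟 := b₀.sum_le_sup h𝒟
        have hle : (∑ x ∈ C \ A, x.1 (a x)) + b₀.1 (𝒟.sup id) ≤ dlt (B ∪ C) + 1 := by
          refine extend_le (B ∪ C) (C \ A) (le_trans Finset.sdiff_subset Finset.subset_union_right) a
            (fun x hx y hy hxy => ha x (Finset.mem_union_right _ (Finset.mem_sdiff.mp hx).1)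
              y (Finset.mem_union_right _ (Finset.mem_sdiff.mp hy).1) hxy)
            b₀ (Finset.mem_union_left _ hb₀) (𝒟.sup id) ?_
          intro x hx
          rw [Finset.disjoint_sup_right]
          intro D hD
          exact ((hAv D hD).mono_right (Finset.le_sup hx)).symm
        have : 1 - b₀.1 U₂ - ε < b₀.1 (𝒟.sup id) := by linarith
        linarith
    rw [hsplit]
    linarith
  have : ∀ v ∈ Vals (A ∪ C), v ≤ (dlt (A ∪ B) + dlt (B ∪ C)) + 1 := by
    intro v hv
    refine le_of_forall_pos_le_add ?_
    intro ε hε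
    exact key v hv ε hε
  have h0 : 0 ≤ dlt (A ∪ B) + dlt (B ∪ C) := by
    have := dlt_nonneg (A ∪ B); have := dlt_nonneg (B ∪ C); linarith
  exact dlt_le h0 this
/-! ### The shift map -/

/-- Shift a finite set of naturals down by one (dropping 0). -/
def sdn (A : Finset ℕ) : Finset ℕ := (A.erase 0).image (· - 1)

/-- Shift a finite set of naturals up by one. -/
def shup (A : Finset ℕ) : Finset ℕ := A.image (· + 1)

lemma mem_sdn {m : ℕ} {A : Finset ℕ} : m ∈ sdn A ↔ m + 1 ∈ A := by
  unfold sdn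
  simp only [Finset.mem_image, Finset.mem_erase]
  constructor
  · rintro ⟨n, ⟨hn0, hnA⟩, rfl⟩
    have h : n - 1 + 1 = n := by omega
    rwa [h]
  · intro h
    exact ⟨m + 1, ⟨by omega, h⟩, by omega⟩

lemma mem_shup {m : ℕ} {A : Finset ℕ} : m ∈ shup A ↔ ∃ k ∈ A, k + 1 = m := by
  unfold shup
  simp

lemma sdn_shup (A : Finset ℕ) : sdn (shup A) = A := by
  ext m
  rw [mem_sdn, mem_shup]
  constructor
  · rintro ⟨k, hk, hk1⟩
    have : k = m := by omega
    exact this ▸ hk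
  · intro h
    exact ⟨m, h, rfl⟩

lemma sdn_empty : sdn ∅ = ∅ := by unfold sdn; simp

lemma zero_not_mem_shup (A : Finset ℕ) : 0 ∉ shup A := by
  rw [mem_shup]
  rintro ⟨k, _, hk⟩
  omega

lemma disj_sdn {A B : Finset ℕ} (h : Disjoint A B) : Disjoint (sdn A) (sdn B) := by
  rw [Finset.disjoint_left] at h ⊢
  intro m hm hm'
  exact h (mem_sdn.mp hm) (mem_sdn.mp hm')

lemma disj_shup {A B : Finset ℕ} (h : Disjoint A B) : Disjoint (shup A) (shup B) := by
  rw [Finset.disjoint_left] at h ⊢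
  intro m hm hm'
  obtain ⟨k, hk, rfl⟩ := mem_shup.mp hm
  obtain ⟨k', hk', hkk⟩ := mem_shup.mp hm'
  have : k' = k := by omega
  exact h hk (this ▸ hk')

lemma shup_inj : Function.Injective shup := by
  intro A B h
  have := congrArg sdn h
  rwa [sdn_shup, sdn_shup] at this

lemma sdn_ne_empty {A : Finset ℕ} (h : sdn A ≠ ∅) : A ≠ ∅ := by
  rintro rfl
  exact h sdn_empty

/-- The map `T` on `Pt`, induced by the shift `n ↦ n + 1` on ℕ. -/
def TP (x : Pt) : Pt := by
  refine ⟨fun A => x.1 (sdn A), ⟨⟨?_, ?_, ?_⟩, ?_⟩⟩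
  · show x.1 (sdn ∅) = 0
    rw [sdn_empty]; exact x.empty0
  · intro A; exact x.nonneg _
  · -- capacity inequality
    intro 𝒟 h𝒟
    classical
    have key : ∑ D ∈ 𝒟, x.1 (sdn D) ≤
        ∑ D ∈ 𝒟.filter (fun D => sdn D ≠ ∅), x.1 (sdn D) := by
      rw [← Finset.sum_filter_add_sum_filter_not 𝒟 (fun D => sdn D ≠ ∅) (fun D => x.1 (sdn D))]
      have : ∑ D ∈ 𝒟.filter (fun D => ¬ sdn D ≠ ∅), x.1 (sdn D) = 0 := by
        refine Finset.sum_eq_zero fun D hD => ?_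
        have : sdn D = ∅ := by
          have := (Finset.mem_filter.mp hD).2
          tauto
        rw [this, x.empty0]
      rw [this, add_zero]
    refine le_trans key ?_
    have hinj : Set.InjOn sdn (𝒟.filter (fun D => sdn D ≠ ∅)) := by
      intro D hD E hE hDE
      by_contra hne
      have hD' := Finset.mem_filter.mp hD
      have hE' := Finset.mem_filter.mp hE
      have hdisj : Disjoint D E := h𝒟 D hD'.1 E hE'.1 hne
      have : Disjoint (sdn D) (sdn E) := disj_sdn hdisj
      rw [hDE] at this
      exact hE'.2 (Pt.eq_empty_of_selfdisj this)
    rw [← Finset.sum_image hinj]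
    refine x.fam_le ?_
    intro D hD E hE hne
    simp only [Finset.mem_image, Finset.mem_filter] at hD hE
    obtain ⟨D', ⟨hD'𝒟, _⟩, rfl⟩ := hD
    obtain ⟨E', ⟨hE'𝒟, _⟩, rfl⟩ := hE
    have : D' ≠ E' := fun h => hne (h ▸ rfl)
    exact disj_sdn (h𝒟 D' hD'𝒟 E' hE'𝒟 this)
  · -- tightness
    intro A hA ε hε
    rcases eq_or_ne (sdn A) ∅ with hsA | hsA
    · obtain ⟨B, hBne, hBgt⟩ := x.near_one hε
      refine ⟨{shup B}, ?_, ?_, ?_⟩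
      · intro D hD E hE hne
        simp only [Finset.mem_singleton] at hD hE
        exact absurd (hD.trans hE.symm) hne
      · intro D hD
        simp only [Finset.mem_singleton] at hD
        subst hD
        rw [Finset.disjoint_left]
        intro m hm hmA
        obtain ⟨k, hk, rfl⟩ := mem_shup.mp hm
        have : k ∈ sdn A := mem_sdn.mpr hmA
        rw [hsA] at this
        exact absurd this (Finset.notMem_empty k)
      · show 1 - ε < x.1 (sdn A) + ∑ D ∈ ({shup B} : Finset (Finset ℕ)), x.1 (sdn D)
        rw [Finset.sum_singleton, hsA, x.empty0, sdn_shup, zero_add]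
        exact hBgt
    · obtain ⟨ℰ, hℰ, hAv, hlt⟩ := x.tight (sdn A) hsA ε hε
      refine ⟨ℰ.image shup, ?_, ?_, ?_⟩
      · intro D hD E hE hne
        simp only [Finset.mem_image] at hD hE
        obtain ⟨D', hD', rfl⟩ := hD
        obtain ⟨E', hE', rfl⟩ := hE
        exact disj_shup (hℰ D' hD' E' hE' (fun h => hne (h ▸ rfl)))
      · intro D hD
        simp only [Finset.mem_image] at hD
        obtain ⟨D', hD', rfl⟩ := hD
        rw [Finset.disjoint_left]
        intro m hm hmA
        obtain ⟨k, hk, rfl⟩ := mem_shup.mp hm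
        have hk' : k ∈ sdn A := mem_sdn.mpr hmA
        exact Finset.disjoint_left.mp (hAv D' hD') hk hk'
      · show 1 - ε < x.1 (sdn A) + ∑ D ∈ ℰ.image shup, x.1 (sdn D)
        rw [Finset.sum_image (fun D _ E _ h => shup_inj h)]
        have : ∀ E ∈ ℰ, x.1 (sdn (shup E)) = x.1 E := fun E _ => by rw [sdn_shup]
        rw [Finset.sum_congr rfl this]
        exact hlt

lemma TP_apply (x : Pt) (A : Finset ℕ) : (TP x).1 A = x.1 (sdn A) := rfl

lemma TP_inj : Function.Injective TP := by
  intro x y h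
  refine Subtype.ext (funext fun A => ?_)
  have := congrArg (fun z : Pt => z.1 (shup A)) h
  simpa only [TP_apply, sdn_shup] using this

/-- `T` is nonexpansive (in fact an isometry on pairs). -/
lemma TP_nonexpansive (x y : Pt) : dlt {TP x, TP y} ≤ dlt {x, y} := by
  rcases eq_or_ne x y with rfl | hxy
  · rw [dlt_of_card_le_one, dlt_of_card_le_one] <;>
      simp [Finset.pair_eq_singleton]
  · have hTxy : TP x ≠ TP y := fun h => hxy (TP_inj h)
    refine dlt_le (dlt_nonneg _) ?_
    rintro v ⟨a, ha, rfl⟩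
    set b : Pt → Finset ℕ :=
      fun w => if w = x then sdn (a (TP x)) else if w = y then sdn (a (TP y)) else ∅ with hb
    have hbx : b x = sdn (a (TP x)) := by simp [hb]
    have hby : b y = sdn (a (TP y)) := by simp [hb, Ne.symm hxy]
    have hmem : x.1 (sdn (a (TP x))) + y.1 (sdn (a (TP y))) ∈ Vals {x, y} := by
      refine ⟨b, ?_, ?_⟩
      · intro w hw z hz hwz
        simp only [Finset.mem_insert, Finset.mem_singleton] at hw hz
        have hdisj : Disjoint (sdn (a (TP x))) (sdn (a (TP y))) :=
          disj_sdn (ha (TP x) (Finset.mem_insert_self _ _) (TP y)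
            (Finset.mem_insert_of_mem (Finset.mem_singleton_self _)) hTxy)
        rcases hw with rfl | rfl <;> rcases hz with rfl | rfl
        · exact absurd rfl hwz
        · rw [hbx, hby]; exact hdisj
        · rw [hbx, hby]; exact hdisj.symm
        · exact absurd rfl hwz
      · rw [Finset.sum_pair hxy, hbx, hby]
    have hval : ∑ w ∈ ({TP x, TP y} : Finset Pt), w.1 (a w)
        = x.1 (sdn (a (TP x))) + y.1 (sdn (a (TP y))) := by
      rw [Finset.sum_pair hTxy]
      rfl
    rw [hval]
    exact le_dlt hmem

/-! ### No finite invariant set -/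

lemma sdn_iter_mem {j m : ℕ} {A : Finset ℕ} : m ∈ sdn^[j] A ↔ m + j ∈ A := by
  induction j generalizing m with
  | zero => simp
  | succ j ih =>
    rw [Function.iterate_succ_apply', mem_sdn, ih,
      show m + 1 + j = m + (j + 1) by omega]

lemma TP_iter_apply (k : ℕ) (x : Pt) (A : Finset ℕ) :
    (TP^[k] x).1 A = x.1 (sdn^[k] A) := by
  induction k generalizing x A with
  | zero => simp
  | succ k ih =>
    rw [Function.iterate_succ_apply', Function.iterate_succ_apply]
    rw [TP_apply, ih]

lemma no_fixed_iterate (x : Pt) (k : ℕ) (hk : 0 < k) (hfix : TP^[k] x = x) : False := by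
  have hfixA : ∀ A : Finset ℕ, x.1 A = x.1 (sdn^[k] A) := by
    intro A
    conv_lhs => rw [← hfix]
    exact TP_iter_apply k x A
  -- by strong induction on the sup, all values vanish
  have main : ∀ s : ℕ, ∀ A : Finset ℕ, A.sup id ≤ s → x.1 A = 0 := by
    intro s
    induction s using Nat.strong_induction_on with
    | _ s ih =>
      intro A hA
      rw [hfixA A]
      rcases eq_or_ne (sdn^[k] A) ∅ with h | h
      · rw [h, x.empty0]
      · obtain ⟨m, hm⟩ := Finset.nonempty_iff_ne_empty.mpr h
        have hmA : m + k ∈ A := sdn_iter_mem.mp hm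
        have hks : k ≤ s := le_trans (by omega : k ≤ m + k) (le_trans (Finset.le_sup (f := id) hmA) hA)
        have hsup : (sdn^[k] A).sup id ≤ s - k := by
          refine Finset.sup_le ?_
          intro b hb
          have h1 : b + k ∈ A := sdn_iter_mem.mp hb
          have h2 : b + k ≤ s := le_trans (Finset.le_sup (f := id) h1) hA
          simp only [id_eq]
          omega
        have hlt : s - k < s := by omega
        exact ih (s - k) hlt _ hsup
  obtain ⟨A, hAne, hgt⟩ := x.near_one (by norm_num : (0:ℝ) < 1/2)
  have := main (A.sup id) A le_rfl
  rw [this] at hgt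
  norm_num at hgt

theorem no_invariant_finset (F : Finset Pt) (hne : F.Nonempty) (hF : F.image TP = F) :
    False := by
  classical
  have hmemT : ∀ x ∈ F, TP x ∈ F := by
    intro x hx
    rw [← hF]
    exact Finset.mem_image_of_mem _ hx
  obtain ⟨x₀, hx₀⟩ := hne
  have hiter : ∀ n : ℕ, TP^[n] x₀ ∈ F := by
    intro n
    induction n with
    | zero => exact hx₀
    | succ n ih => rw [Function.iterate_succ_apply']; exact hmemT _ ih
  have : ∃ m n : ℕ, m ≠ n ∧ TP^[m] x₀ = TP^[n] x₀ := by
    obtain ⟨m, n, hne', hmn⟩ := Finite.exists_ne_map_eq_of_infinite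
      (fun n : ℕ => (⟨TP^[n] x₀, hiter n⟩ : {z // z ∈ F}))
    exact ⟨m, n, hne', congrArg Subtype.val hmn⟩
  obtain ⟨m, n, hmn, heq⟩ := this
  rcases Nat.lt_or_ge m n with h | h
  · have : TP^[m] (TP^[n - m] x₀) = TP^[m] x₀ := by
      rw [← Function.iterate_add_apply]
      rw [show m + (n - m) = n by omega]
      exact heq.symm
    have hfix : TP^[n - m] x₀ = x₀ := Function.Injective.iterate TP_inj m this
    exact no_fixed_iterate x₀ (n - m) (by omega) hfix
  · have hlt : n < m := by omega
    have : TP^[n] (TP^[m - n] x₀) = TP^[n] x₀ := by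
      rw [← Function.iterate_add_apply]
      rw [show n + (m - n) = m by omega]
      exact heq
    have hfix : TP^[m - n] x₀ = x₀ := Function.Injective.iterate TP_inj n this
    exact no_fixed_iterate x₀ (m - n) (by omega) hfix
/-! ### Hyperconvexity -/

/-- An "entry": a finite set of points with an assignment of finite subsets of ℕ. -/
abbrev Entry := Finset Pt × (Pt → Finset ℕ)

/-- Internal disjointness of an entry's assignment. -/
def eOK (p : Entry) : Prop := ∀ y ∈ p.1, ∀ z ∈ p.1, y ≠ z → Disjoint (p.2 y) (p.2 z)

/-- Mutual disjointness of two entries. -/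
def eDisj (p p' : Entry) : Prop := ∀ y ∈ p.1, ∀ z ∈ p'.1, Disjoint (p.2 y) (p'.2 z)

/-- All sets of an entry are disjoint from `D`. -/
def eAvoid (p : Entry) (D : Finset ℕ) : Prop := ∀ y ∈ p.1, Disjoint (p.2 y) D

/-- Global disjointness of a list of entries ("witness"). -/
def WOK : List Entry → Prop
  | [] => True
  | p :: L => eOK p ∧ (∀ p' ∈ L, eDisj p p') ∧ WOK L

/-- The value of an entry. -/
def entVal (p : Entry) : ℝ := ∑ y ∈ p.1, y.1 (p.2 y)

/-- The net value of a witness with respect to `r`. -/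
def rawVal (r : Finset Pt → ℝ) (L : List Entry) : ℝ :=
  (L.map (fun p => entVal p - r p.1)).sum

/-- The union of the points appearing in a witness. -/
def YS : List Entry → Finset Pt
  | [] => ∅
  | p :: L => p.1 ∪ YS L

/-- The union of all sets appearing in a witness. -/
def Usets : List Entry → Finset ℕ
  | [] => ∅
  | p :: L => p.1.sup p.2 ∪ Usets L

lemma rawVal_nil (r : Finset Pt → ℝ) : rawVal r [] = 0 := rfl

lemma rawVal_cons (r : Finset Pt → ℝ) (p : Entry) (L : List Entry) :
    rawVal r (p :: L) = (entVal p - r p.1) + rawVal r L := by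
  simp [rawVal]

lemma rawVal_append (r : Finset Pt → ℝ) (L L' : List Entry) :
    rawVal r (L ++ L') = rawVal r L + rawVal r L' := by
  simp [rawVal]

lemma rawVal_eq (r : Finset Pt → ℝ) (L : List Entry) :
    rawVal r L = (L.map entVal).sum - (L.map (fun p => r p.1)).sum := by
  induction L with
  | nil => simp [rawVal]
  | cons p L ih => rw [rawVal_cons, ih]; simp; ring

lemma WOK_append {L L' : List Entry} (h : WOK L) (h' : WOK L')
    (hcross : ∀ p ∈ L, ∀ p' ∈ L', eDisj p p') : WOK (L ++ L') := by
  induction L with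
  | nil => simpa using h'
  | cons p L ih =>
    obtain ⟨h1, h2, h3⟩ := h
    refine ⟨h1, ?_, ih h3 (fun q hq q' hq' => hcross q (List.mem_cons_of_mem _ hq) q' hq')⟩
    intro p' hp'
    rcases List.mem_append.mp hp' with hm | hm
    · exact h2 p' hm
    · exact hcross p (List.mem_cons_self) p' hm

lemma subset_Usets {L : List Entry} {p : Entry} (hp : p ∈ L) {y : Pt} (hy : y ∈ p.1) :
    p.2 y ≤ Usets L := by
  induction L with
  | nil => exact absurd hp (List.not_mem_nil)
  | cons q L ih =>
    show p.2 y ≤ q.1.sup q.2 ⊔ Usets L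
    rcases List.mem_cons.mp hp with rfl | hm
    · exact le_trans (Finset.le_sup hy) le_sup_left
    · exact le_trans (ih hm) le_sup_right

lemma disjoint_Usets {L : List Entry} {D : Finset ℕ} (h : ∀ p ∈ L, eAvoid p D) :
    Disjoint (Usets L) D := by
  induction L with
  | nil => exact disjoint_bot_left
  | cons p L ih =>
    refine Finset.disjoint_union_left.mpr ⟨?_, ih (fun q hq => h q (List.mem_cons_of_mem _ hq))⟩
    rw [Finset.disjoint_sup_left]
    intro y hy
    exact h p (List.mem_cons_self) y hy

/-- The fundamental merging estimate: the total value of a globally disjoint witness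
is bounded by a single disjoint assignment on the union of its point sets. -/
lemma merge (L : List Entry) (hL : WOK L) :
    ∃ m : Pt → Finset ℕ,
      (∀ y z : Pt, y ≠ z → Disjoint (m y) (m z)) ∧
      (∀ D : Finset ℕ, (∀ p ∈ L, eAvoid p D) → ∀ y : Pt, Disjoint (m y) D) ∧
      (L.map entVal).sum ≤ ∑ y ∈ YS L, y.1 (m y) := by
  induction L with
  | nil =>
    exact ⟨fun _ => ∅, fun _ _ _ => disjoint_bot_left, fun _ _ _ => disjoint_bot_left, by simp [YS]⟩
  | cons p L ih =>
    obtain ⟨h1, h2, h3⟩ := hL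
    obtain ⟨m', hm'disj, hm'avoid, hm'sum⟩ := ih h3
    have hpm' : ∀ y z : Pt, y ∈ p.1 → Disjoint (p.2 y) (m' z) := by
      intro y z hy
      refine (hm'avoid (p.2 y) ?_ z).symm
      intro p' hp' z' hz'
      exact (h2 p' hp' y hy z' hz').symm
    set m : Pt → Finset ℕ := fun y => (if y ∈ p.1 then p.2 y else ∅) ∪ m' y with hm
    refine ⟨m, ?_, ?_, ?_⟩
    · intro y z hyz
      simp only [hm]
      apply Finset.disjoint_union_left.mpr
      constructor <;> apply Finset.disjoint_union_right.mpr <;> constructor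
      · by_cases hy : y ∈ p.1 <;> by_cases hz : z ∈ p.1 <;>
          simp [hy, hz, disjoint_bot_left, disjoint_bot_right]
        exact h1 y hy z hz hyz
      · by_cases hy : y ∈ p.1 <;> simp [hy, disjoint_bot_left]
        exact hpm' y z hy
      · by_cases hz : z ∈ p.1 <;> simp [hz, disjoint_bot_right]
        exact (hpm' z y hz).symm
      · exact hm'disj y z hyz
    · intro D hD y
      simp only [hm]
      apply Finset.disjoint_union_left.mpr
      constructor
      · by_cases hy : y ∈ p.1 <;> simp [hy, disjoint_bot_left]
        exact hD p (List.mem_cons_self) y hy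
      · exact hm'avoid D (fun p' hp' => hD p' (List.mem_cons_of_mem _ hp')) y
    · rw [List.map_cons, List.sum_cons]
      have hstep : ∀ y ∈ p.1 ∪ YS L,
          (if y ∈ p.1 then y.1 (p.2 y) else 0) + (if y ∈ YS L then y.1 (m' y) else 0)
            ≤ y.1 (m y) := by
        intro y _
        by_cases hy : y ∈ p.1
        · have hub : (if y ∈ YS L then y.1 (m' y) else 0) ≤ y.1 (m' y) := by
            by_cases hys : y ∈ YS L <;> simp [hys, y.nonneg]
          have := y.superadd (hpm' y y hy)
          simp only [hm, if_pos hy]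
          linarith
        · simp only [hm, if_neg hy, Finset.empty_union, zero_add]
          by_cases hys : y ∈ YS L <;> simp [hys, y.nonneg]
      calc entVal p + (L.map entVal).sum
          ≤ entVal p + ∑ y ∈ YS L, y.1 (m' y) := by linarith
        _ = ∑ y ∈ p.1 ∪ YS L,
            ((if y ∈ p.1 then y.1 (p.2 y) else 0) + (if y ∈ YS L then y.1 (m' y) else 0)) := by
            rw [Finset.sum_add_distrib, Finset.sum_ite_mem, Finset.sum_ite_mem,
              Finset.inter_eq_right.mpr Finset.subset_union_left,
              Finset.inter_eq_right.mpr Finset.subset_union_right]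
            rfl
        _ ≤ ∑ y ∈ p.1 ∪ YS L, y.1 (m y) := Finset.sum_le_sum hstep
        _ = ∑ y ∈ YS (p :: L), y.1 (m y) := rfl

lemma YS_eq_sup (L : List Entry) : (L.map Prod.fst).toFinset.sup id = YS L := by
  induction L with
  | nil => simp [YS]
  | cons p L ih =>
    rw [List.map_cons, List.toFinset_cons, Finset.sup_insert, ih]
    rfl

section WithR

variable {r : Finset Pt → ℝ}
variable (hval : ∀ 𝒜 : Finset (Finset Pt), dlt (𝒜.sup id) ≤ ∑ A ∈ 𝒜, r A)

include hval

lemma dlt_le_r (Y : Finset Pt) : dlt Y ≤ r Y := by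
  have := hval {Y}
  simpa using this

lemma r_nonneg (Y : Finset Pt) : 0 ≤ r Y := le_trans (dlt_nonneg Y) (dlt_le_r hval Y)

lemma toFinset_sum_le (l : List (Finset Pt)) :
    ∑ Y ∈ l.toFinset, r Y ≤ (l.map r).sum := by
  induction l with
  | nil => simp
  | cons a l ih =>
    rw [List.toFinset_cons, List.map_cons, List.sum_cons]
    by_cases ha : a ∈ l.toFinset
    · rw [Finset.insert_eq_self.mpr ha]
      have := r_nonneg hval a
      linarith
    · rw [Finset.sum_insert ha]
      linarith

/-- Key estimate ("Lemma V"): any globally disjoint witness has net value at most 1. -/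
lemma rawVal_le_one (L : List Entry) (hL : WOK L) : rawVal r L ≤ 1 := by
  obtain ⟨m, hmdisj, _, hmsum⟩ := merge L hL
  have h1 : (L.map entVal).sum ≤ dlt (YS L) + 1 :=
    le_trans hmsum (le_dlt ⟨m, fun x _ y _ h => hmdisj x y h, rfl⟩)
  have h2 : dlt (YS L) ≤ (L.map (fun p => r p.1)).sum := by
    have hA := hval (L.map Prod.fst).toFinset
    rw [YS_eq_sup] at hA
    refine le_trans hA (le_trans (le_of_eq rfl) ?_)
    have := toFinset_sum_le hval (L.map Prod.fst)
    rwa [List.map_map] at this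
  rw [rawVal_eq]
  linarith

/-- The constraint system defining the candidate point. -/
def GoodCap (q : Finset ℕ → ℝ) : Prop :=
  q ∅ = 0 ∧ (∀ A, 0 ≤ q A) ∧
  ∀ (𝒟 : Finset (Finset ℕ)) (L : List Entry), famOK 𝒟 → WOK L →
    (∀ D ∈ 𝒟, ∀ p ∈ L, eAvoid p D) →
    (∑ D ∈ 𝒟, q D) + rawVal r L ≤ 1

omit hval in
lemma GoodCap.le_one {q : Finset ℕ → ℝ} (h : GoodCap (r := r) q) (A : Finset ℕ) : q A ≤ 1 := by
  have hfam : famOK {A} := by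
    intro D hD E hE hne
    simp only [Finset.mem_singleton] at hD hE
    exact absurd (hD.trans hE.symm) hne
  have := h.2.2 {A} [] hfam trivial (by simp)
  simpa [rawVal] using this

lemma GoodCap_zero : GoodCap (r := r) (fun _ => 0) := by
  refine ⟨rfl, fun _ => le_rfl, ?_⟩
  intro 𝒟 L _ hL _
  have := rawVal_le_one hval L hL
  simpa using this

end WithR
section Main

variable {r : Finset Pt → ℝ}
variable (hval : ∀ 𝒜 : Finset (Finset Pt), dlt (𝒜.sup id) ≤ ∑ A ∈ 𝒜, r A)

include hval

/-- Zorn: there is a maximal element of the constraint system. -/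
lemma exists_maximal_GoodCap :
    ∃ q : Finset ℕ → ℝ, GoodCap (r := r) q ∧
      ∀ q' : Finset ℕ → ℝ, GoodCap (r := r) q' → q ≤ q' → q' = q := by
  have H := zorn_le_nonempty₀ {q : Finset ℕ → ℝ | GoodCap (r := r) q} ?_
    (fun _ => 0) (GoodCap_zero hval)
  · obtain ⟨m, _, hm⟩ := H
    exact ⟨m, hm.1, fun q' hq' hle => le_antisymm (hm.2 hq' hle) hle⟩
  · intro c hc hchain y hy
    set ub : Finset ℕ → ℝ := fun A => sSup ((fun q : Finset ℕ → ℝ => q A) '' c) with hub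
    have hcne : c.Nonempty := ⟨y, hy⟩
    have himne : ∀ A, ((fun q : Finset ℕ → ℝ => q A) '' c).Nonempty :=
      fun A => hcne.image _
    have hbdd : ∀ A, BddAbove ((fun q : Finset ℕ → ℝ => q A) '' c) := by
      intro A
      refine ⟨1, ?_⟩
      rintro v ⟨q, hq, rfl⟩
      exact GoodCap.le_one (hc hq) A
    have hle : ∀ q ∈ c, q ≤ ub := by
      intro q hq A
      exact le_csSup (hbdd A) ⟨q, hq, rfl⟩
    refine ⟨ub, ?_, hle⟩
    refine ⟨?_, ?_, ?_⟩
    · refine le_antisymm ?_ ?_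
      · refine csSup_le (himne ∅) ?_
        rintro v ⟨q, hq, rfl⟩
        exact le_of_eq (hc hq).1
      · have : (0:ℝ) ∈ (fun q : Finset ℕ → ℝ => q ∅) '' c := ⟨y, hy, (hc hy).1⟩
        exact le_csSup (hbdd ∅) this
    · intro A
      exact le_trans ((hc hy).2.1 A) (hle y hy A)
    · intro 𝒟 L hfam hL hcross
      refine le_of_forall_pos_le_add ?_
      intro ε hε
      set ε' : ℝ := ε / (𝒟.card + 1) with hε'
      have hε'pos : 0 < ε' := by positivity
      -- find a single element of the chain nearly dominating ub on 𝒟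
      have key : ∀ 𝒟₀ : Finset (Finset ℕ), ∃ q ∈ c,
          ∑ D ∈ 𝒟₀, ub D ≤ (∑ D ∈ 𝒟₀, q D) + 𝒟₀.card * ε' := by
        classical
        intro 𝒟₀
        induction 𝒟₀ using Finset.induction_on with
        | empty => exact ⟨y, hy, by simp⟩
        | @insert D 𝒟' hD ihD =>
          obtain ⟨q₁, hq₁, hq₁le⟩ := ihD
          have : ub D - ε' < sSup ((fun q : Finset ℕ → ℝ => q D) '' c) := by
            have : ub D - ε' < ub D := by linarith
            exact this
          obtain ⟨v, ⟨q₂, hq₂, rfl⟩, hv⟩ := exists_lt_of_lt_csSup (himne D) this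
          rcases hchain.total hq₁ hq₂ with hcmp | hcmp
          · refine ⟨q₂, hq₂, ?_⟩
            rw [Finset.sum_insert hD, Finset.sum_insert hD]
            have hm : ∑ E ∈ 𝒟', q₁ E ≤ ∑ E ∈ 𝒟', q₂ E :=
              Finset.sum_le_sum (fun E _ => hcmp E)
            have hcard : ((insert D 𝒟').card : ℝ) = 𝒟'.card + 1 := by
              rw [Finset.card_insert_of_notMem hD]
              push_cast
              ring
            rw [hcard]
            linarith
          · refine ⟨q₁, hq₁, ?_⟩
            rw [Finset.sum_insert hD, Finset.sum_insert hD]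
            have hcard : ((insert D 𝒟').card : ℝ) = 𝒟'.card + 1 := by
              rw [Finset.card_insert_of_notMem hD]
              push_cast
              ring
            have : q₂ D ≤ q₁ D := hcmp D
            rw [hcard]
            linarith
      obtain ⟨q, hq, hqle⟩ := key 𝒟
      have hgood := (hc hq).2.2 𝒟 L hfam hL hcross
      have hcard_le : (𝒟.card : ℝ) * ε' ≤ ε := by
        rw [hε']
        rw [div_eq_inv_mul]
        have h1 : (0:ℝ) < (𝒟.card : ℝ) + 1 := by positivity
        rw [mul_comm ((𝒟.card : ℝ) + 1)⁻¹ ε, ← mul_assoc]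
        have : (𝒟.card : ℝ) * ((𝒟.card : ℝ) + 1)⁻¹ ≤ 1 := by
          rw [mul_inv_le_iff₀ h1]
          linarith
        nlinarith [hε.le]
      linarith

variable {qm : Finset ℕ → ℝ}
variable (hqm : GoodCap (r := r) qm)
variable (hmax : ∀ q' : Finset ℕ → ℝ, GoodCap (r := r) q' → qm ≤ q' → q' = qm)

include hqm hmax

/-- The raising lemma: at a maximal element, every value is nearly attained by
a configuration avoiding the given set. -/
lemma raise_lemma (A : Finset ℕ) (hA : A ≠ ∅) {γ : ℝ} (hγ : 0 < γ) :
    ∃ (𝒟 : Finset (Finset ℕ)) (L : List Entry), famOK 𝒟 ∧ WOK L ∧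
      (∀ D ∈ 𝒟, ∀ p ∈ L, eAvoid p D) ∧ famAvoid 𝒟 A ∧ (∀ p ∈ L, eAvoid p A) ∧
      1 - γ < qm A + ((∑ D ∈ 𝒟, qm D) + rawVal r L) := by
  by_contra hcon
  push_neg at hcon
  set q' : Finset ℕ → ℝ := Function.update qm A (qm A + γ) with hq'
  have hq'A : q' A = qm A + γ := Function.update_self A _ qm
  have hq'ne : ∀ B ≠ A, q' B = qm B := fun B hB => Function.update_of_ne hB _ qm
  have hq'good : GoodCap (r := r) q' := by
    refine ⟨?_, ?_, ?_⟩
    · rw [hq'ne ∅ (Ne.symm (by simpa using hA))]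
      exact hqm.1
    · intro B
      rcases eq_or_ne B A with rfl | hB
      · rw [hq'A]; have := hqm.2.1 B; linarith
      · rw [hq'ne B hB]; exact hqm.2.1 B
    · intro 𝒟 L hfam hL hcross
      by_cases hmem : A ∈ 𝒟
      · have herase : ∀ D ∈ 𝒟.erase A, q' D = qm D := by
          intro D hD
          exact hq'ne D (Finset.mem_erase.mp hD).1
        rw [← Finset.add_sum_erase _ _ hmem, hq'A, Finset.sum_congr rfl herase]
        have hA1 : famOK (𝒟.erase A) := fun D hD E hE hne =>
          hfam D (Finset.mem_of_mem_erase hD) E (Finset.mem_of_mem_erase hE) hne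
        have hA2 : ∀ D ∈ 𝒟.erase A, ∀ p ∈ L, eAvoid p D := fun D hD p hp =>
          hcross D (Finset.mem_of_mem_erase hD) p hp
        have hA3 : famAvoid (𝒟.erase A) A := by
          intro D hD
          obtain ⟨hne, hD𝒟⟩ := Finset.mem_erase.mp hD
          exact hfam D hD𝒟 A hmem hne
        have hA4 : ∀ p ∈ L, eAvoid p A := fun p hp => hcross A hmem p hp
        have := hcon (𝒟.erase A) L hA1 hL hA2 hA3 hA4
        linarith
      · have : ∀ D ∈ 𝒟, q' D = qm D := fun D hD =>
          hq'ne D (fun h => hmem (h ▸ hD))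
        rw [Finset.sum_congr rfl this]
        exact hqm.2.2 𝒟 L hfam hL hcross
  have hle : qm ≤ q' := by
    intro B
    rcases eq_or_ne B A with rfl | hB
    · rw [hq'A]; linarith
    · rw [hq'ne B hB]
  have := congrFun (hmax q' hq'good hle) A
  rw [hq'A] at this
  linarith

/-- Absorption: the maximal element dominates the net value of any witness on
the union of its sets. -/
lemma absorb (L : List Entry) (hL : WOK L) : rawVal r L ≤ qm (Usets L) := by
  rcases eq_or_ne (Usets L) ∅ with hU | hU
  · have hz : ∀ p ∈ L, entVal p = 0 := by
      intro p hp
      refine Finset.sum_eq_zero fun y hy => ?_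
      have h0 : p.2 y = ∅ := Finset.subset_empty.mp (hU ▸ subset_Usets hp hy)
      rw [h0]
      exact y.empty0
    have h1 : (L.map entVal).sum = 0 := by
      refine List.sum_eq_zero ?_
      intro v hv
      obtain ⟨p, hp, rfl⟩ := List.mem_map.mp hv
      exact hz p hp
    have h2 : 0 ≤ (L.map (fun p => r p.1)).sum := by
      refine List.sum_nonneg ?_
      intro v hv
      obtain ⟨p, _, rfl⟩ := List.mem_map.mp hv
      exact r_nonneg hval p.1
    rw [rawVal_eq, hU, hqm.1, h1]
    linarith
  · refine le_of_forall_pos_le_add ?_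
    intro γ hγ
    obtain ⟨𝒟', L', hfam', hL', hcross', hDU, hLU, hgt⟩ :=
      raise_lemma hval hqm hmax (Usets L) hU hγ
    have hLL' : WOK (L' ++ L) := by
      refine WOK_append hL' hL ?_
      intro p' hp' p hp
      intro y' hy' z hz
      exact ((hLU p' hp' y' hy').mono_right (subset_Usets hp hz))
    have hcrossLL' : ∀ D ∈ 𝒟', ∀ p ∈ L' ++ L, eAvoid p D := by
      intro D hD p hp
      rcases List.mem_append.mp hp with hm | hm
      · exact hcross' D hD p hm
      · intro z hz
        exact ((hDU D hD).symm.mono_left (subset_Usets hm hz))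
    have hgood := hqm.2.2 𝒟' (L' ++ L) hfam' hLL' hcrossLL'
    rw [rawVal_append] at hgood
    linarith

/-- The maximal element is a capacity. -/
lemma qm_isCap : IsCap qm := by
  refine ⟨hqm.1, hqm.2.1, ?_⟩
  intro 𝒟 h𝒟
  have := hqm.2.2 𝒟 [] h𝒟 trivial (by simp)
  simpa [rawVal] using this

/-- The maximal element is tight. -/
lemma qm_tight : TightCap qm := by
  intro A hA ε hε
  obtain ⟨𝒟, L, hfam, hL, hcross, hDA, hLA, hgt⟩ := raise_lemma hval hqm hmax A hA hε
  have habs := absorb hval hqm hmax L hL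
  rcases eq_or_ne (Usets L) ∅ with hU | hU
  · refine ⟨𝒟, hfam, hDA, ?_⟩
    rw [hU, hqm.1] at habs
    linarith
  · have hUD : ∀ D ∈ 𝒟, Disjoint (Usets L) D := by
      intro D hD
      exact disjoint_Usets (fun p hp => hcross D hD p hp)
    have hUnot : Usets L ∉ 𝒟 := by
      intro hmem
      exact hU (Pt.eq_empty_of_selfdisj (hUD _ hmem))
    refine ⟨insert (Usets L) 𝒟, ?_, ?_, ?_⟩
    · intro D hD E hE hne
      rcases Finset.mem_insert.mp hD with rfl | hD' <;>
        rcases Finset.mem_insert.mp hE with rfl | hE'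
      · exact absurd rfl hne
      · exact hUD E hE'
      · exact (hUD D hD').symm
      · exact hfam D hD' E hE' hne
    · intro D hD
      rcases Finset.mem_insert.mp hD with rfl | hD'
      · exact disjoint_Usets hLA
      · exact hDA D hD'
    · rw [Finset.sum_insert hUnot]
      linarith

/-- The point of `Pt` obtained from the Zorn construction. -/
def zPt : Pt := ⟨qm, qm_isCap hval hqm hmax, qm_tight hval hqm hmax⟩

lemma zPt_spec (hr0 : r ∅ = 0) : ∀ Y : Finset Pt, dlt (insert (zPt hval hqm hmax) Y) ≤ r Y := by
  intro Y
  set z : Pt := zPt hval hqm hmax with hz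
  by_cases hzY : z ∈ Y
  · rw [Finset.insert_eq_self.mpr hzY]
    exact dlt_le_r hval Y
  · refine dlt_le (r_nonneg hval Y) ?_
    rintro v ⟨a, ha, rfl⟩
    rw [Finset.sum_insert hzY]
    have hzq : z.1 = qm := rfl
    have hWOK : WOK [(Y, a)] := by
      refine ⟨?_, fun p' hp' => absurd hp' (List.not_mem_nil), trivial⟩
      intro y hy w hw hyw
      exact ha y (Finset.mem_insert_of_mem hy) w (Finset.mem_insert_of_mem hw) hyw
    have hrawval : rawVal r [(Y, a)] = (∑ y ∈ Y, y.1 (a y)) - r Y := by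
      simp [rawVal, entVal]
    rcases eq_or_ne (a z) ∅ with haz | haz
    · have := hqm.2.2 ∅ [(Y, a)] (by intro D hD; simp at hD) hWOK (by simp)
      rw [hrawval] at this
      rw [haz, hzq, hqm.1]
      simp only [Finset.sum_empty, zero_add] at this ⊢
      linarith
    · have hcross : ∀ D ∈ ({a z} : Finset (Finset ℕ)), ∀ p ∈ [(Y, a)], eAvoid p D := by
        intro D hD p hp
        simp only [Finset.mem_singleton] at hD
        subst hD
        rcases List.mem_cons.mp hp with rfl | hm
        · intro y hy
          refine ha y (Finset.mem_insert_of_mem hy) z (Finset.mem_insert_self _ _) ?_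
          rintro rfl
          exact hzY hy
        · exact absurd hm (List.not_mem_nil)
      have hfam : famOK {a z} := by
        intro D hD E hE hne
        simp only [Finset.mem_singleton] at hD hE
        exact absurd (hD.trans hE.symm) hne
      have := hqm.2.2 {a z} [(Y, a)] hfam hWOK hcross
      rw [hrawval, Finset.sum_singleton] at this
      rw [hzq]
      linarith

end Main

/-- The diversity `dlt` on `Pt` is hyperconvex. -/
theorem dlt_hyperconvex :
    ∀ r : Finset Pt → ℝ, r ∅ = 0 →
      (∀ 𝒜 : Finset (Finset Pt), dlt (𝒜.sup id) ≤ ∑ A ∈ 𝒜, r A) →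
      ∃ z : Pt, ∀ Y : Finset Pt, dlt (insert z Y) ≤ r Y := by
  intro r hr0 hval
  obtain ⟨qm, hqm, hmax⟩ := exists_maximal_GoodCap hval
  exact ⟨zPt hval hqm hmax, zPt_spec hval hqm hmax hr0⟩

end

/-- There exist a hyperconvex diversity `(X, δ)` with bounded induced
metric space and a map `T : X → X`, nonexpansive with respect to the induced metric,
such that no nonempty finite subset `F ⊆ X` satisfies `T(F) = F`; that is, `T` has no
fixed point with respect to the diversity. -/
theorem exists_nonexpansive_without_diversity_fixed_point :
    ∃ (X : Type) (_ : DecidableEq X) (D : Diversity X) (T : X → X),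
      D.Hyperconvex ∧
      (∃ M : ℝ, ∀ x y : X, D.delta {x, y} ≤ M) ∧
      (∀ x y : X, D.delta {T x, T y} ≤ D.delta {x, y}) ∧
      ∀ F : Finset X, F.Nonempty → F.image T ≠ F := by
  refine ⟨Pt, inferInstance, ⟨dlt, dlt_nonneg, dlt_eq_zero_iff, dlt_triangle⟩, TP,
    ?_, ?_, ?_, ?_⟩
  · intro r hr0 hval
    exact dlt_hyperconvex r hr0 hval
  · exact ⟨1, fun x y => dlt_pair_le_one x y⟩
  · exact fun x y => TP_nonexpansive x y
  · intro F hne hF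
    exact no_invariant_finset F hne hF
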